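/- If f : 𝔻ⁿ → ℂ is holomorphic with sup norm at most 1 and f(0) = 0, and a ∈ 𝔻ⁿ satisfies |aᵢ| < r for all i for some 0 < r < 1, then ‖Df(a)‖₁ = Σᵢ |∂f/∂zᵢ(a)| ≤ 1/(1 − r²). More precisely, for any a ∈ 𝔻ⁿ, ‖Df(a)‖₁ ≤ (1 − |f(a)|²)·maxᵢ 1/(1 − |aᵢ|²). -/

import Mathlib

open Metric Set Complex Filter Topology

lemma normSq_lt_one (c : ℂ) (hc : ‖c‖ < 1) : normSq c < 1 := by
  rw [normSq_eq_norm_sq]; nlinarith [norm_nonneg c]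

lemma mob_id (c u : ℂ) :
    normSq (1 + (starRingEnd ℂ) c * u) - normSq (c + u) = (1 - normSq c) * (1 - normSq u) := by
  simp only [Complex.normSq_apply, Complex.add_re, Complex.add_im, Complex.mul_re, Complex.mul_im,
    Complex.conj_re, Complex.conj_im, Complex.one_re, Complex.one_im]
  ring

lemma mob_den_ne (c u : ℂ) (hc : ‖c‖ < 1) (hu : ‖u‖ ≤ 1) :
    1 + (starRingEnd ℂ) c * u ≠ 0 := by
  intro h
  have h1 : (starRingEnd ℂ) c * u = -1 := by linear_combination h
  have : ‖(starRingEnd ℂ) c * u‖ < 1 := by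
    rw [norm_mul, RCLike.norm_conj]
    calc ‖c‖ * ‖u‖ < 1 * 1 := by
          rcases eq_or_lt_of_le hu with h | h
          · nlinarith [norm_nonneg c]
          · nlinarith [norm_nonneg c, norm_nonneg u]
    _ = 1 := by norm_num
  rw [h1] at this; simp at this

lemma mob_mem (c u : ℂ) (hc : ‖c‖ < 1) (hu : ‖u‖ < 1) :
    ‖(c + u) / (1 + (starRingEnd ℂ) c * u)‖ < 1 := by
  have hd := mob_den_ne c u hc hu.le
  rw [norm_div, div_lt_one (norm_pos_iff.mpr hd)]
  have h2 : normSq (c + u) < normSq (1 + (starRingEnd ℂ) c * u) := by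
    have h3 := mob_id c u
    have h4 := normSq_lt_one c hc
    have h5 := normSq_lt_one u hu
    nlinarith
  have h6 := Real.sqrt_lt_sqrt (normSq_nonneg _) h2
  rw [normSq_eq_norm_sq, normSq_eq_norm_sq, Real.sqrt_sq (norm_nonneg _),
    Real.sqrt_sq (norm_nonneg _)] at h6
  exact h6

/-- Schwarz–Pick at the origin, open target disc. -/
lemma schwarz_pick_open (g : ℂ → ℂ) (hg : DifferentiableOn ℂ g (ball 0 1))
    (hm : MapsTo g (ball 0 1) (ball 0 1)) : ‖deriv g 0‖ ≤ 1 - ‖g 0‖ ^ 2 := by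
  set b := g 0 with hb
  have hb1 : ‖b‖ < 1 := by simpa using hm (mem_ball_self one_pos)
  set ψ : ℂ → ℂ := fun w => (w - b) / (1 - (starRingEnd ℂ) b * w) with hψ
  set h : ℂ → ℂ := fun z => ψ (g z) with hh
  have hden : ∀ w : ℂ, ‖w‖ < 1 → 1 - (starRingEnd ℂ) b * w ≠ 0 := by
    intro w hw
    have := mob_den_ne (-b) w (by simpa using hb1) hw.le
    simpa [sub_eq_add_neg, neg_mul] using this
  -- h maps ball to ball and h 0 = 0
  have hmap : MapsTo h (ball 0 1) (ball (h 0) 1) := by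
    have h0 : h 0 = 0 := by
      simp only [hh, hψ, ← hb]
      field_simp
      simp
    rw [h0]
    intro z hz
    have hgz : ‖g z‖ < 1 := by simpa using hm hz
    have := mob_mem (-b) (g z) (by simpa using hb1) hgz
    simpa [hh, hψ, mem_ball, dist_eq_norm, sub_eq_add_neg, neg_mul, add_comm] using this
  have hdiff : DifferentiableOn ℂ h (ball 0 1) := by
    intro z hz
    have hgz : ‖g z‖ < 1 := by simpa using hm hz
    have h1 : DifferentiableWithinAt ℂ g (ball 0 1) z := hg z hz
    exact ((differentiableAt_id.sub_const b).differentiableWithinAt.comp z h1 (mapsTo_univ _ _)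
      |>.div (((differentiableAt_const _).sub
        ((differentiableAt_const _).mul differentiableAt_id)).differentiableWithinAt.comp z h1
        (mapsTo_univ _ _)) (by simpa using hden (g z) hgz))
  have hS : ‖deriv h 0‖ ≤ 1 / 1 :=
    Complex.norm_deriv_le_div_of_mapsTo_ball hdiff (hmap.mono_right ball_subset_closedBall) one_pos
  -- compute deriv h 0
  have hgd : DifferentiableAt ℂ g 0 := hg.differentiableAt (isOpen_ball.mem_nhds (mem_ball_self one_pos))
  have hdb : (1 : ℂ) - (starRingEnd ℂ) b * b ≠ 0 := hden b hb1
  have hnum : HasDerivAt (fun z => g z - b) (deriv g 0) 0 := (hgd.hasDerivAt).sub_const b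
  have hdenD : HasDerivAt (fun z => 1 - (starRingEnd ℂ) b * g z)
      (-((starRingEnd ℂ) b * deriv g 0)) 0 := by
    simpa using ((hgd.hasDerivAt.const_mul ((starRingEnd ℂ) b)).const_sub 1)
  have hdiv : HasDerivAt h
      ((deriv g 0 * (1 - (starRingEnd ℂ) b * b) - (b - b) * (-((starRingEnd ℂ) b * deriv g 0)))
        / (1 - (starRingEnd ℂ) b * b) ^ 2) 0 := hnum.div hdenD hdb
  have hval : deriv h 0 = deriv g 0 / (1 - (starRingEnd ℂ) b * b) := by
    rw [hdiv.deriv]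
    field_simp
    ring
  rw [hval] at hS
  have hcb : (starRingEnd ℂ) b * b = (normSq b : ℂ) := by
    rw [mul_comm, Complex.mul_conj]
  have hns : (1 : ℝ) - normSq b > 0 := by linarith [normSq_lt_one b hb1]
  have : ‖deriv g 0‖ / (1 - normSq b) ≤ 1 := by
    have : ‖(1 : ℂ) - (starRingEnd ℂ) b * b‖ = 1 - normSq b := by
      rw [hcb]
      rw [show (1 : ℂ) - (normSq b : ℂ) = ((1 - normSq b : ℝ) : ℂ) by push_cast; ring]
      rw [Complex.norm_real, Real.norm_eq_abs, abs_of_pos hns]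
    rw [norm_div, this] at hS
    linarith
  have := (div_le_one hns).mp this
  have hnsq : normSq b = ‖b‖ ^ 2 := by rw [normSq_eq_norm_sq]
  linarith [hnsq ▸ this]

lemma schwarz_pick_closed (g : ℂ → ℂ) (hg : DifferentiableOn ℂ g (ball 0 1))
    (hm : ∀ z ∈ ball (0:ℂ) 1, ‖g z‖ ≤ 1) : ‖deriv g 0‖ ≤ 1 - ‖g 0‖ ^ 2 := by
  set D := ‖deriv g 0‖ with hD
  set B := ‖g 0‖ with hB
  have key : ∀ t : ℝ, t ∈ Ioo (0:ℝ) 1 → t * D ≤ 1 - (t * B) ^ 2 := by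
    intro t ht
    set gt : ℂ → ℂ := fun z => (t : ℂ) * g z with hgt
    have hgt_diff : DifferentiableOn ℂ gt (ball 0 1) := hg.const_mul _
    have hgt_map : MapsTo gt (ball 0 1) (ball 0 1) := by
      intro z hz
      simp only [hgt, mem_ball, dist_zero_right, norm_mul, Complex.norm_real,
        Real.norm_eq_abs, abs_of_pos ht.1]
      calc t * ‖g z‖ ≤ t * 1 := by
            have := hm z hz
            nlinarith [ht.1]
        _ < 1 := by simpa using ht.2
    have := schwarz_pick_open gt hgt_diff hgt_map
    have hd0 : deriv gt 0 = (t : ℂ) * deriv g 0 := by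
      have : DifferentiableAt ℂ g 0 :=
        hg.differentiableAt (isOpen_ball.mem_nhds (mem_ball_self one_pos))
      simpa [hgt] using (this.hasDerivAt.const_mul ((t:ℝ):ℂ)).deriv
    rw [hd0] at this
    simp only [hgt, norm_mul, Complex.norm_real, Real.norm_eq_abs, abs_of_pos ht.1] at this
    linarith [this]
  have htend : Tendsto (fun t : ℝ => (1 - (t * B) ^ 2) / t) (𝓝[<] (1:ℝ)) (𝓝 (1 - B ^ 2)) := by
    have hc : ContinuousAt (fun t : ℝ => (1 - (t * B) ^ 2) / t) 1 := by
      apply ContinuousAt.div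
      · fun_prop
      · fun_prop
      · norm_num
    have h2 : Tendsto (fun t : ℝ => (1 - (t * B) ^ 2) / t) (𝓝[<] (1:ℝ))
        (𝓝 ((1 - ((1:ℝ) * B) ^ 2) / 1)) := hc.tendsto.mono_left nhdsWithin_le_nhds
    simpa using h2
  refine ge_of_tendsto htend ?_
  filter_upwards [Ioo_mem_nhdsLT_of_mem (show (1:ℝ) ∈ Ioc (0:ℝ) 1 by norm_num)] with t ht
  rw [le_div_iff₀ ht.1]
  calc D * t = t * D := mul_comm _ _
    _ ≤ 1 - (t * B) ^ 2 := key t ht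


/-- Gradient estimate on the polydisc: if `f : 𝔻ⁿ → ℂ` is holomorphic with `|f| ≤ 1` and
`f(0) = 0`, then `‖Df(a)‖₁ ≤ (1 − |f(a)|²)·maxᵢ 1/(1 − |aᵢ|²)`, and in particular
`‖Df(a)‖₁ ≤ 1/(1 − r²)` whenever `|aᵢ| < r < 1` for all `i`. -/
theorem stmt7 (n : ℕ) (hn : 0 < n) (f : (Fin n → ℂ) → ℂ)
    (hf : DifferentiableOn ℂ f {z | ∀ i, ‖z i‖ < 1})
    (hbd : ∀ z : Fin n → ℂ, (∀ i, ‖z i‖ < 1) → ‖f z‖ ≤ 1)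
    (hf0 : f 0 = 0)
    (a : Fin n → ℂ) (ha : ∀ i, ‖a i‖ < 1) :
    (∑ i, ‖fderiv ℂ f a (Pi.single i 1)‖) ≤
        (1 - ‖f a‖ ^ 2) *
          Finset.univ.sup' (Finset.univ_nonempty_iff.mpr ⟨⟨0, hn⟩⟩)
            (fun i => 1 / (1 - ‖a i‖ ^ 2)) ∧
      ∀ r : ℝ, 0 < r → r < 1 → (∀ i, ‖a i‖ < r) →
        (∑ i, ‖fderiv ℂ f a (Pi.single i 1)‖) ≤ 1 / (1 - r ^ 2) := by
  classical
  have hSopen : IsOpen {z : Fin n → ℂ | ∀ i, ‖z i‖ < 1} := by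
    have : {z : Fin n → ℂ | ∀ i, ‖z i‖ < 1} = ⋂ i, {z : Fin n → ℂ | ‖z i‖ < 1} := by
      ext z; simp
    rw [this]
    exact isOpen_iInter_of_finite fun i =>
      isOpen_lt ((continuous_apply i).norm) continuous_const
  have hfa : DifferentiableAt ℂ f a := hf.differentiableAt (hSopen.mem_nhds ha)
  set c : Fin n → ℂ := fun i => fderiv ℂ f a (Pi.single i 1) with hcdef
  set e : Fin n → ℂ := fun i => if c i = 0 then 1 else (starRingEnd ℂ) (c i) / ‖c i‖ with hedef
  have he1 : ∀ i, ‖e i‖ = 1 := by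
    intro i
    by_cases h : c i = 0
    · simp [hedef, h]
    · simp only [hedef, h, if_false, norm_div, RCLike.norm_conj, Complex.norm_real,
        Real.norm_eq_abs, abs_norm]
      exact div_self (norm_ne_zero_iff.mpr h)
  have he2 : ∀ i, c i * e i = ((‖c i‖ : ℝ) : ℂ) := by
    intro i
    by_cases h : c i = 0
    · simp [hedef, h]
    · simp only [hedef, h, if_false]
      rw [mul_div_assoc']
      rw [Complex.mul_conj]
      rw [show (normSq (c i) : ℂ) = ((‖c i‖ ^ 2 : ℝ) : ℂ) by
        norm_cast; rw [normSq_eq_norm_sq]]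
      have hne : ((‖c i‖ : ℝ) : ℂ) ≠ 0 := by
        simpa using norm_ne_zero_iff.mpr h
      push_cast
      rw [sq, mul_div_assoc, div_self hne, mul_one]
  set v : Fin n → ℂ := fun i => e i * ((1 - ‖a i‖ ^ 2 : ℝ) : ℂ) with hvdef
  set φ : ℂ → Fin n → ℂ :=
    fun w i => (a i + e i * w) / (1 + (starRingEnd ℂ) (a i) * (e i * w)) with hφdef
  have hnormeiw : ∀ (w : ℂ) (i : Fin n), ‖e i * w‖ = ‖w‖ := by
    intro w i; rw [norm_mul, he1 i, one_mul]
  have hφmem : ∀ w ∈ ball (0:ℂ) 1, ∀ i, ‖φ w i‖ < 1 := by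
    intro w hw i
    have hw1 : ‖w‖ < 1 := by simpa using hw
    exact mob_mem (a i) (e i * w) (ha i) (by rw [hnormeiw]; exact hw1)
  have hφdiff : DifferentiableOn ℂ φ (ball 0 1) := by
    apply differentiableOn_pi.mpr
    intro i
    apply DifferentiableOn.div
    · exact (differentiable_const _).differentiableOn.add
        ((differentiable_id.const_mul _).differentiableOn)
    · exact (differentiable_const _).differentiableOn.add
        (((differentiable_id.const_mul (e i)).const_mul _).differentiableOn)
    · intro w hw
      have hw1 : ‖w‖ < 1 := by simpa using hw
      exact mob_den_ne (a i) (e i * w) (ha i) (by rw [hnormeiw]; exact hw1.le)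
  set g : ℂ → ℂ := fun w => f (φ w) with hgdef
  have hφ0 : φ 0 = a := by funext i; simp [hφdef]
  have hg : DifferentiableOn ℂ g (ball 0 1) :=
    hf.comp hφdiff fun w hw => hφmem w hw
  have hgb : ∀ w ∈ ball (0:ℂ) 1, ‖g w‖ ≤ 1 := fun w hw => hbd _ (hφmem w hw)
  have hg0 : g 0 = f a := by rw [hgdef]; simp [hφ0]
  -- derivative of φ at 0
  have hφder : HasDerivAt φ v 0 := by
    apply hasDerivAt_pi.mpr
    intro i
    have hnum : HasDerivAt (fun w : ℂ => a i + e i * w) (e i) 0 := by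
      simpa using ((hasDerivAt_id (0:ℂ)).const_mul (e i)).const_add (a i)
    have hden : HasDerivAt (fun w : ℂ => 1 + (starRingEnd ℂ) (a i) * (e i * w))
        ((starRingEnd ℂ) (a i) * e i) 0 := by
      simpa [mul_assoc] using
        (((hasDerivAt_id (0:ℂ)).const_mul (e i)).const_mul ((starRingEnd ℂ) (a i))).const_add 1
    have hden0 : (1 : ℂ) + (starRingEnd ℂ) (a i) * (e i * 0) ≠ 0 := by simp
    have hdiv := hnum.div hden hden0
    have hns : (starRingEnd ℂ) (a i) * a i = ((‖a i‖ ^ 2 : ℝ) : ℂ) := by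
      rw [mul_comm, Complex.mul_conj]
      norm_cast
      rw [normSq_eq_norm_sq]
    have heq : (e i * (1 + (starRingEnd ℂ) (a i) * (e i * 0)) -
        (a i + e i * 0) * ((starRingEnd ℂ) (a i) * e i)) /
        (1 + (starRingEnd ℂ) (a i) * (e i * 0)) ^ 2 = v i := by
      simp only [mul_zero, add_zero, one_pow, div_one]
      have hvi : v i = e i * ((1 - ‖a i‖ ^ 2 : ℝ) : ℂ) := rfl
      rw [hvi]
      push_cast at hns ⊢
      linear_combination (- e i) * hns
    rw [heq] at hdiv
    exact hdiv
  have hgderiv : HasDerivAt g (fderiv ℂ f a v) 0 := by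
    have hl : HasFDerivAt f (fderiv ℂ f a) (φ 0) := by rw [hφ0]; exact hfa.hasFDerivAt
    exact hl.comp_hasDerivAt 0 hφder
  have hv : v = ∑ i, v i • (Pi.single i (1:ℂ) : Fin n → ℂ) := by
    funext j
    simp [Pi.single_apply]
  have hsum : fderiv ℂ f a v = ((∑ i, ‖c i‖ * (1 - ‖a i‖ ^ 2) : ℝ) : ℂ) := by
    rw [hv, map_sum, Complex.ofReal_sum]
    apply Finset.sum_congr rfl
    intro i _
    rw [ContinuousLinearMap.map_smul, smul_eq_mul]
    have hc2 := he2 i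
    have hvi : v i = e i * ((1 - ‖a i‖ ^ 2 : ℝ) : ℂ) := rfl
    rw [hvi]
    push_cast at hc2 ⊢
    linear_combination ((1:ℂ) - (‖a i‖:ℂ) ^ 2) * hc2
  -- apply Schwarz–Pick
  have hsq : ∀ i : Fin n, ‖a i‖ ^ 2 < 1 := by
    intro i; nlinarith [ha i, norm_nonneg (a i)]
  have hterm_nonneg : ∀ i ∈ Finset.univ, (0:ℝ) ≤ ‖c i‖ * (1 - ‖a i‖ ^ 2) := by
    intro i _
    exact mul_nonneg (norm_nonneg _) (by linarith [hsq i])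
  have key : ∑ i, ‖c i‖ * (1 - ‖a i‖ ^ 2) ≤ 1 - ‖f a‖ ^ 2 := by
    have hsp := schwarz_pick_closed g hg hgb
    rw [hgderiv.deriv, hsum, hg0] at hsp
    rwa [Complex.norm_real, Real.norm_eq_abs,
      _root_.abs_of_nonneg (Finset.sum_nonneg hterm_nonneg)] at hsp
  set M : ℝ := Finset.univ.sup' (Finset.univ_nonempty_iff.mpr ⟨⟨0, hn⟩⟩)
      (fun i => 1 / (1 - ‖a i‖ ^ 2)) with hM
  have hMge : ∀ i : Fin n, 1 / (1 - ‖a i‖ ^ 2) ≤ M := fun i =>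
    Finset.le_sup' (fun j => 1 / (1 - ‖a j‖ ^ 2)) (Finset.mem_univ i)
  have hMpos : 0 < M := by
    refine lt_of_lt_of_le ?_ (hMge ⟨0, hn⟩)
    have := hsq ⟨0, hn⟩
    apply div_pos one_pos
    linarith
  have hmain : ∑ i, ‖c i‖ ≤ (1 - ‖f a‖ ^ 2) * M := by
    calc ∑ i, ‖c i‖ ≤ ∑ i, ‖c i‖ * (1 - ‖a i‖ ^ 2) * M := by
          apply Finset.sum_le_sum
          intro i _
          have h1 : 0 < 1 - ‖a i‖ ^ 2 := by linarith [hsq i]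
          have h2 : 1 / (1 - ‖a i‖ ^ 2) ≤ M := hMge i
          rw [mul_assoc]
          nlinarith [norm_nonneg (c i), (div_le_iff₀ h1).mp h2]
      _ = (∑ i, ‖c i‖ * (1 - ‖a i‖ ^ 2)) * M := by rw [Finset.sum_mul]
      _ ≤ (1 - ‖f a‖ ^ 2) * M := by
          exact mul_le_mul_of_nonneg_right key hMpos.le
  refine ⟨hmain, ?_⟩
  intro r hr0 hr1 har
  have hfa1 : ‖f a‖ ≤ 1 := hbd a ha
  have hrsq : 0 < 1 - r ^ 2 := by nlinarith
  have hMle : M ≤ 1 / (1 - r ^ 2) := by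
    apply Finset.sup'_le
    intro i _
    have h1 : 1 - r ^ 2 ≤ 1 - ‖a i‖ ^ 2 := by
      nlinarith [har i, norm_nonneg (a i)]
    gcongr
  calc ∑ i, ‖c i‖ ≤ (1 - ‖f a‖ ^ 2) * M := hmain
    _ ≤ 1 * M := by nlinarith [norm_nonneg (f a)]
    _ = M := one_mul M
    _ ≤ 1 / (1 - r ^ 2) := hMle
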